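/- Let I ⊆ k[x_1,…,x_n] be an ideal, > a monomial order, G_>(I) the reduced Gröbner basis of I with respect to >, and M ∈ ℚ^{r×n} (with ℚ^r carrying the lexicographic order ≻). Then in_>(in_M(I)) = in_>(I) if and only if in_>(in_M(g)) = in_>(g) for every g ∈ G_>(I). -/

import Mathlib

open MvPolynomial

instance finWellFoundedLT {r : ℕ} : WellFoundedLT (Fin r) := Finite.to_wellFoundedLT

/-- The initial form of a polynomial with respect to a comparison `le` on exponent vectors:
the sum of the terms of `f` whose exponent is `le`-minimal in the support of `f`.
For a total order this is the single `le`-smallest term of `f`. -/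
noncomputable def initialForm {k : Type} [Field k] {n : ℕ}
    (le : (Fin n →₀ ℕ) → (Fin n →₀ ℕ) → Prop)
    (f : MvPolynomial (Fin n) k) : MvPolynomial (Fin n) k :=
  letI := Classical.decPred fun α : Fin n →₀ ℕ => ∀ β ∈ f.support, le α β
  ∑ α ∈ f.support.filter (fun α => ∀ β ∈ f.support, le α β),
    monomial α (MvPolynomial.coeff α f)

/-- The initial ideal of `I`: the ideal generated by initial forms of nonzero elements of `I`. -/
noncomputable def initialIdeal {k : Type} [Field k] {n : ℕ}
    (le : (Fin n →₀ ℕ) → (Fin n →₀ ℕ) → Prop)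
    (I : Ideal (MvPolynomial (Fin n) k)) : Ideal (MvPolynomial (Fin n) k) :=
  Ideal.span {g | ∃ f ∈ I, f ≠ 0 ∧ g = initialForm le f}

/-- The weight `Mα ∈ ℚ^r` of an exponent vector `α` under the weighting matrix `M`. -/
def mwt {n r : ℕ} (M : Matrix (Fin r) (Fin n) ℚ) (α : Fin n →₀ ℕ) : Fin r → ℚ :=
  fun i => ∑ j, M i j * (α j : ℚ)

/-- Comparison of exponents by `M`-weight, in the lexicographic order on `ℚ^r`. -/
def mLe {n r : ℕ} (M : Matrix (Fin r) (Fin n) ℚ) : (Fin n →₀ ℕ) → (Fin n →₀ ℕ) → Prop :=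
  fun α β => toLex (mwt M α) ≤ toLex (mwt M β)

/-- A monomial order on `k[x₁,…,xₙ]` in the MIN convention: a total order on exponent
vectors compatible with addition in which `0` (the monomial `1`) is the greatest element. -/
structure MinMonomialOrder (n : ℕ) where
  le : (Fin n →₀ ℕ) → (Fin n →₀ ℕ) → Prop
  total : ∀ a b, le a b ∨ le b a
  antisymm : ∀ a b, le a b → le b a → a = b
  trans : ∀ a b c, le a b → le b c → le a c
  add_le_add : ∀ a b c, le a b → le (a + c) (b + c)
  le_zero : ∀ a, le a 0

/-- `α` is the exponent of the initial (i.e. `le`-smallest) term of `f`. -/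
def IsLeadExp {k : Type} [Field k] {n : ℕ} (mo : MinMonomialOrder n)
    (f : MvPolynomial (Fin n) k) (α : Fin n →₀ ℕ) : Prop :=
  α ∈ f.support ∧ ∀ β ∈ f.support, mo.le α β

/-- `G` is the reduced Gröbner basis of `I` with respect to the monomial order `mo`:
`G ⊆ I`, the initial terms of `G` generate the initial ideal of `I`, every `g ∈ G` is monic,
no initial term of one element divides the initial term of another, and no non-initial term
of any `g ∈ G` is divisible by the initial term of any `g' ∈ G`.  (Divisibility of monomials
is the componentwise order `≤` on exponents.) -/
def IsReducedGB {k : Type} [Field k] {n : ℕ} (mo : MinMonomialOrder n)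
    (I : Ideal (MvPolynomial (Fin n) k)) (G : Finset (MvPolynomial (Fin n) k)) : Prop :=
  (↑G : Set (MvPolynomial (Fin n) k)) ⊆ ↑I ∧ (0 : MvPolynomial (Fin n) k) ∉ G ∧
  initialIdeal mo.le I = Ideal.span ((fun g => initialForm mo.le g) '' ↑G) ∧
  (∀ g ∈ G, ∀ α, IsLeadExp mo g α → MvPolynomial.coeff α g = 1) ∧
  (∀ g ∈ G, ∀ g' ∈ G, g ≠ g' → ∀ α α', IsLeadExp mo g α → IsLeadExp mo g' α' → ¬ α' ≤ α) ∧
  (∀ g ∈ G, ∀ g' ∈ G, ∀ β ∈ g.support, ¬ IsLeadExp mo g β →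
    ∀ α', IsLeadExp mo g' α' → ¬ α' ≤ β)

section Aux

variable {k : Type} [Field k] {n r : ℕ}

/-- Minimum existence for a total transitive relation on a nonempty finset. -/
lemma exists_rel_min {α : Type*} (le : α → α → Prop)
    (htot : ∀ a b, le a b ∨ le b a)
    (htrans : ∀ a b c, le a b → le b c → le a c) :
    ∀ (s : Finset α), s.Nonempty → ∃ a ∈ s, ∀ b ∈ s, le a b := by
  classical
  intro s
  induction s using Finset.induction_on with
  | empty => rintro ⟨x, hx⟩; simp at hx
  | @insert a t ha ih =>
    intro _
    rcases t.eq_empty_or_nonempty with rfl | ht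
    · refine ⟨a, by simp, ?_⟩
      intro b hb
      have hb' : b = a := by simpa using hb
      rcases htot a b with h | h
      · exact h
      · rw [hb'] at h ⊢; exact h
    · obtain ⟨m, hm, hmin⟩ := ih ht
      rcases htot m a with h | h
      · refine ⟨m, Finset.mem_insert_of_mem hm, ?_⟩
        intro b hb
        rcases Finset.mem_insert.mp hb with rfl | hb
        · exact h
        · exact hmin b hb
      · refine ⟨a, Finset.mem_insert_self _ _, ?_⟩
        intro b hb
        rcases Finset.mem_insert.mp hb with rfl | hb
        · rcases htot b b with h' | h' <;> exact h'
        · exact htrans _ _ _ h (hmin b hb)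

variable {le : (Fin n →₀ ℕ) → (Fin n →₀ ℕ) → Prop}

lemma coeff_initialForm_of (f : MvPolynomial (Fin n) k) {β : Fin n →₀ ℕ}
    (hβ : ∀ γ ∈ f.support, le β γ) :
    coeff β (initialForm le f) = coeff β f := by
  classical
  by_cases hsupp : β ∈ f.support
  · rw [initialForm, coeff_sum, Finset.sum_eq_single β]
    · rw [coeff_monomial, if_pos rfl]
    · intro b _ hne
      rw [coeff_monomial, if_neg hne]
    · intro h
      simp only [Finset.mem_filter] at h
      exact absurd ⟨hsupp, hβ⟩ h
  · rw [notMem_support_iff.mp hsupp, initialForm, coeff_sum, Finset.sum_eq_zero]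
    intro b hb
    simp only [Finset.mem_filter] at hb
    rw [coeff_monomial, if_neg]
    rintro rfl
    exact hsupp hb.1

lemma coeff_initialForm_of_not (f : MvPolynomial (Fin n) k) {β : Fin n →₀ ℕ}
    (hβ : ¬ ∀ γ ∈ f.support, le β γ) :
    coeff β (initialForm le f) = 0 := by
  classical
  rw [initialForm, coeff_sum, Finset.sum_eq_zero]
  intro b hb
  simp only [Finset.mem_filter] at hb
  rw [coeff_monomial, if_neg]
  rintro rfl
  exact hβ hb.2

lemma mem_support_initialForm {f : MvPolynomial (Fin n) k} {β : Fin n →₀ ℕ} :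
    β ∈ (initialForm le f).support ↔ β ∈ f.support ∧ ∀ γ ∈ f.support, le β γ := by
  classical
  constructor
  · intro h
    by_cases hβ : ∀ γ ∈ f.support, le β γ
    · refine ⟨?_, hβ⟩
      rw [mem_support_iff] at h ⊢
      rwa [coeff_initialForm_of f hβ] at h
    · rw [mem_support_iff, coeff_initialForm_of_not f hβ] at h
      exact absurd rfl h
  · rintro ⟨h1, h2⟩
    rw [mem_support_iff, coeff_initialForm_of f h2]
    exact mem_support_iff.mp h1

lemma support_initialForm_subset {f : MvPolynomial (Fin n) k} :
    (initialForm le f).support ⊆ f.support := fun _ h => (mem_support_initialForm.mp h).1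

lemma coeff_initialForm_of_mem_support {f : MvPolynomial (Fin n) k} {β : Fin n →₀ ℕ}
    (h : β ∈ (initialForm le f).support) :
    coeff β (initialForm le f) = coeff β f :=
  coeff_initialForm_of f (mem_support_initialForm.mp h).2

lemma initialForm_ne_zero (htot : ∀ a b, le a b ∨ le b a)
    (htrans : ∀ a b c, le a b → le b c → le a c)
    {f : MvPolynomial (Fin n) k} (hf : f ≠ 0) : initialForm le f ≠ 0 := by
  obtain ⟨α, hα, hmin⟩ := exists_rel_min le htot htrans f.support
    (MvPolynomial.support_nonempty.mpr hf)
  intro h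
  have : α ∈ (initialForm le f).support := mem_support_initialForm.mpr ⟨hα, hmin⟩
  rw [h] at this
  simp at this

lemma initialForm_neg (f : MvPolynomial (Fin n) k) :
    initialForm le (-f) = - initialForm le f := by
  classical
  apply MvPolynomial.ext
  intro β
  rw [coeff_neg]
  by_cases hβ : ∀ γ ∈ f.support, le β γ
  · rw [coeff_initialForm_of f hβ, coeff_initialForm_of (-f) (by simpa using hβ), coeff_neg]
  · rw [coeff_initialForm_of_not f hβ, coeff_initialForm_of_not (-f) (by simpa using hβ),
      neg_zero]

end Aux

section Aux2

variable {k : Type} [Field k] {n r : ℕ}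

namespace MinMonomialOrder

variable (mo : MinMonomialOrder n)

lemma refl (a : Fin n →₀ ℕ) : mo.le a a := (mo.total a a).elim id id

lemma le_of_dvd {α β : Fin n →₀ ℕ} (h : α ≤ β) : mo.le β α := by
  have h1 : mo.le (β - α) 0 := mo.le_zero _
  have h2 := mo.add_le_add _ _ α h1
  rwa [tsub_add_cancel_of_le h, zero_add] at h2

lemma add_left_iff (m a b : Fin n →₀ ℕ) : mo.le (m + a) (m + b) ↔ mo.le a b := by
  constructor
  · intro h
    rcases mo.total a b with h' | h'
    · exact h'
    · have := mo.add_le_add _ _ m h'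
      rw [add_comm b m, add_comm a m] at this
      have heq := mo.antisymm _ _ h this
      have : a = b := by
        have := add_left_cancel heq
        exact this
      rw [this]
      exact mo.refl b
  · intro h
    have := mo.add_le_add _ _ m h
    rwa [add_comm a m, add_comm b m] at this

lemma wf : WellFounded (fun a b : Fin n →₀ ℕ => mo.le b a ∧ a ≠ b) := by
  have hpwo : (Set.univ : Set (Fin n →₀ ℕ)).PartiallyWellOrderedOn
      (fun a b => mo.le b a) := by
    rw [Set.partiallyWellOrderedOn_iff_exists_lt]
    intro f hf
    obtain ⟨m, n', hmn, hle⟩ := Set.partiallyWellOrderedOn_iff_exists_lt.mp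
      (Set.isPWO_of_wellQuasiOrderedLE (Set.univ : Set (Fin n →₀ ℕ))) f
      (fun i => Set.mem_univ _)
    exact ⟨m, n', hmn, mo.le_of_dvd hle⟩
  haveI : IsPreorder (Fin n →₀ ℕ) (fun a b => mo.le b a) :=
    { refl := fun a => mo.refl a
      trans := fun a b c hab hbc => mo.trans _ _ _ hbc hab }
  have hwf := hpwo.wellFoundedOn
  rw [Set.wellFoundedOn_univ] at hwf
  refine Subrelation.wf ?_ hwf
  rintro a b ⟨h1, h2⟩
  refine ⟨h1, fun h3 => h2 ?_⟩
  exact mo.antisymm _ _ h3 h1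

end MinMonomialOrder

lemma mLe_total (M : Matrix (Fin r) (Fin n) ℚ) (a b : Fin n →₀ ℕ) :
    mLe M a b ∨ mLe M b a := le_total _ _

lemma mLe_trans (M : Matrix (Fin r) (Fin n) ℚ) (a b c : Fin n →₀ ℕ)
    (h1 : mLe M a b) (h2 : mLe M b c) : mLe M a c := le_trans h1 h2

lemma mwt_add (M : Matrix (Fin r) (Fin n) ℚ) (a b : Fin n →₀ ℕ) :
    mwt M (a + b) = mwt M a + mwt M b := by
  funext i
  simp only [mwt, Finsupp.coe_add, Pi.add_apply, Nat.cast_add, mul_add,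
    Finset.sum_add_distrib]

lemma mwt_eq_of_le_le {M : Matrix (Fin r) (Fin n) ℚ} {a b : Fin n →₀ ℕ}
    (h1 : mLe M a b) (h2 : mLe M b a) : mwt M a = mwt M b :=
  toLex.injective (le_antisymm h1 h2)

lemma mLe_of_mwt_eq {M : Matrix (Fin r) (Fin n) ℚ} {a b : Fin n →₀ ℕ}
    (h : mwt M a = mwt M b) : mLe M a b := by
  unfold mLe
  rw [h]

lemma mLe_add_left_iff (M : Matrix (Fin r) (Fin n) ℚ) (m a b : Fin n →₀ ℕ) :
    mLe M (m + a) (m + b) ↔ mLe M a b := by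
  unfold mLe
  rw [mwt_add, mwt_add]
  exact add_le_add_iff_left (toLex (mwt M m))

section Poly

variable {le : (Fin n →₀ ℕ) → (Fin n →₀ ℕ) → Prop}

lemma IsLeadExp.unique {mo : MinMonomialOrder n} {f : MvPolynomial (Fin n) k}
    {α β : Fin n →₀ ℕ} (h1 : IsLeadExp mo f α) (h2 : IsLeadExp mo f β) : α = β :=
  mo.antisymm _ _ (h1.2 β h2.1) (h2.2 α h1.1)

lemma exists_isLeadExp (mo : MinMonomialOrder n) {f : MvPolynomial (Fin n) k}
    (hf : f ≠ 0) : ∃ α, IsLeadExp mo f α := by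
  obtain ⟨α, h1, h2⟩ := exists_rel_min mo.le mo.total mo.trans f.support
    (MvPolynomial.support_nonempty.mpr hf)
  exact ⟨α, h1, h2⟩

lemma initialForm_eq_monomial {mo : MinMonomialOrder n} {f : MvPolynomial (Fin n) k}
    {α : Fin n →₀ ℕ} (h : IsLeadExp mo f α) :
    initialForm mo.le f = monomial α (coeff α f) := by
  apply MvPolynomial.ext
  intro β
  rw [coeff_monomial]
  by_cases hβ : β = α
  · subst hβ
    rw [if_pos rfl, coeff_initialForm_of f h.2]
  · rw [if_neg (Ne.symm hβ)]
    by_cases hcond : ∀ γ ∈ f.support, mo.le β γ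
    · rw [coeff_initialForm_of f hcond]
      by_cases hsupp : β ∈ f.support
      · exact absurd (IsLeadExp.unique ⟨hsupp, hcond⟩ h) hβ
      · exact notMem_support_iff.mp hsupp
    · exact coeff_initialForm_of_not f hcond

lemma mem_support_monomial_mul {m : Fin n →₀ ℕ} {c : k} (hc : c ≠ 0)
    {f : MvPolynomial (Fin n) k} {β : Fin n →₀ ℕ} :
    β ∈ (monomial m c * f).support ↔ ∃ δ ∈ f.support, β = m + δ := by
  rw [mem_support_iff, coeff_monomial_mul']
  constructor
  · intro h
    by_cases hm : m ≤ β
    · rw [if_pos hm] at h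
      refine ⟨β - m, ?_, (add_tsub_cancel_of_le hm).symm⟩
      rw [mem_support_iff]
      intro h0
      rw [h0, mul_zero] at h
      exact h rfl
    · rw [if_neg hm] at h
      exact absurd rfl h
  · rintro ⟨δ, hδ, rfl⟩
    have hm : m ≤ m + δ := le_add_right le_rfl
    rw [if_pos hm, add_tsub_cancel_left]
    exact mul_ne_zero hc (mem_support_iff.mp hδ)

lemma initialForm_monomial_mul (le : (Fin n →₀ ℕ) → (Fin n →₀ ℕ) → Prop)
    (hcompat : ∀ m a b, le (m + a) (m + b) ↔ le a b)
    {m : Fin n →₀ ℕ} {c : k} (hc : c ≠ 0) (f : MvPolynomial (Fin n) k) :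
    initialForm le (monomial m c * f) = monomial m c * initialForm le f := by
  apply MvPolynomial.ext
  intro β
  rw [coeff_monomial_mul' (R := k)]
  by_cases hm : m ≤ β
  · rw [if_pos hm]
    have hβ : m + (β - m) = β := add_tsub_cancel_of_le hm
    by_cases hcond : ∀ γ ∈ f.support, le (β - m) γ
    · rw [coeff_initialForm_of f hcond, coeff_initialForm_of (monomial m c * f) ?side,
        ← hβ, coeff_monomial_mul, add_tsub_cancel_left]
      case side =>
        intro γ hγ
        obtain ⟨δ', hδ', rfl⟩ := (mem_support_monomial_mul hc).mp hγ
        rw [← hβ]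
        exact (hcompat m _ _).mpr (hcond δ' hδ')
    · rw [coeff_initialForm_of_not f hcond, mul_zero,
        coeff_initialForm_of_not (monomial m c * f) ?side2]
      case side2 =>
        intro h
        apply hcond
        intro γ hγ
        have : m + γ ∈ (monomial m c * f).support :=
          (mem_support_monomial_mul hc).mpr ⟨γ, hγ, rfl⟩
        have := h _ this
        rw [← hβ] at this
        exact (hcompat m _ _).mp this
  · rw [if_neg hm]
    by_cases hcond : ∀ γ ∈ (monomial m c * f).support, le β γ
    · rw [coeff_initialForm_of _ hcond, coeff_monomial_mul', if_neg hm]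
    · exact coeff_initialForm_of_not _ hcond

lemma isLeadExp_monomial_mul {mo : MinMonomialOrder n} {m : Fin n →₀ ℕ} {c : k}
    (hc : c ≠ 0) {f : MvPolynomial (Fin n) k} {α : Fin n →₀ ℕ}
    (h : IsLeadExp mo f α) : IsLeadExp mo (monomial m c * f) (m + α) := by
  constructor
  · exact (mem_support_monomial_mul hc).mpr ⟨α, h.1, rfl⟩
  · intro β hβ
    obtain ⟨δ, hδ, rfl⟩ := (mem_support_monomial_mul hc).mp hβ
    exact (mo.add_left_iff m α δ).mpr (h.2 δ hδ)

end Poly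

end Aux2

section Wcomp

variable {k : Type} [Field k] {n r : ℕ}

/-- The `M`-weight-`w` homogeneous component of a polynomial. -/
noncomputable def wcomp (M : Matrix (Fin r) (Fin n) ℚ) (w : Fin r → ℚ)
    (f : MvPolynomial (Fin n) k) : MvPolynomial (Fin n) k :=
  letI := Classical.decPred fun α : Fin n →₀ ℕ => mwt M α = w
  ∑ α ∈ f.support.filter (fun α => mwt M α = w), monomial α (MvPolynomial.coeff α f)

variable {M : Matrix (Fin r) (Fin n) ℚ}

lemma coeff_wcomp_of {w : Fin r → ℚ} {β : Fin n →₀ ℕ} (f : MvPolynomial (Fin n) k)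
    (hβ : mwt M β = w) : coeff β (wcomp M w f) = coeff β f := by
  classical
  by_cases hsupp : β ∈ f.support
  · rw [wcomp, coeff_sum, Finset.sum_eq_single β]
    · rw [coeff_monomial, if_pos rfl]
    · intro b _ hne
      rw [coeff_monomial, if_neg hne]
    · intro h
      simp only [Finset.mem_filter] at h
      exact absurd ⟨hsupp, hβ⟩ h
  · rw [notMem_support_iff.mp hsupp, wcomp, coeff_sum, Finset.sum_eq_zero]
    intro b hb
    simp only [Finset.mem_filter] at hb
    rw [coeff_monomial, if_neg]
    rintro rfl
    exact hsupp hb.1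

lemma coeff_wcomp_of_not {w : Fin r → ℚ} {β : Fin n →₀ ℕ} (f : MvPolynomial (Fin n) k)
    (hβ : mwt M β ≠ w) : coeff β (wcomp M w f) = 0 := by
  classical
  rw [wcomp, coeff_sum, Finset.sum_eq_zero]
  intro b hb
  simp only [Finset.mem_filter] at hb
  rw [coeff_monomial, if_neg]
  rintro rfl
  exact hβ hb.2

lemma mem_support_wcomp {w : Fin r → ℚ} {β : Fin n →₀ ℕ} {f : MvPolynomial (Fin n) k} :
    β ∈ (wcomp M w f).support ↔ β ∈ f.support ∧ mwt M β = w := by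
  constructor
  · intro h
    by_cases hβ : mwt M β = w
    · rw [mem_support_iff, coeff_wcomp_of f hβ] at h
      exact ⟨mem_support_iff.mpr h, hβ⟩
    · rw [mem_support_iff, coeff_wcomp_of_not f hβ] at h
      exact absurd rfl h
  · rintro ⟨h1, h2⟩
    rw [mem_support_iff, coeff_wcomp_of f h2]
    exact mem_support_iff.mp h1

lemma wcomp_zero (w : Fin r → ℚ) : wcomp M w (0 : MvPolynomial (Fin n) k) = 0 := by
  classical
  rw [wcomp]
  simp

lemma wcomp_add (w : Fin r → ℚ) (f g : MvPolynomial (Fin n) k) :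
    wcomp M w (f + g) = wcomp M w f + wcomp M w g := by
  apply MvPolynomial.ext
  intro β
  rw [coeff_add]
  by_cases hβ : mwt M β = w
  · rw [coeff_wcomp_of _ hβ, coeff_wcomp_of _ hβ, coeff_wcomp_of _ hβ, coeff_add]
  · rw [coeff_wcomp_of_not _ hβ, coeff_wcomp_of_not _ hβ, coeff_wcomp_of_not _ hβ, add_zero]

lemma wcomp_monomial_mul {w : Fin r → ℚ} {m : Fin n →₀ ℕ} {c : k} (hc : c ≠ 0)
    (f : MvPolynomial (Fin n) k) :
    wcomp M w (monomial m c * f) = monomial m c * wcomp M (w - mwt M m) f := by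
  apply MvPolynomial.ext
  intro β
  rw [coeff_monomial_mul' (R := k)]
  by_cases hm : m ≤ β
  · rw [if_pos hm]
    have hβ : m + (β - m) = β := add_tsub_cancel_of_le hm
    have hwβ : mwt M β = mwt M m + mwt M (β - m) := by
      conv_lhs => rw [← hβ]
      rw [mwt_add]
    by_cases hw : mwt M (β - m) = w - mwt M m
    · have hww : mwt M β = w := by
        rw [hwβ, hw]
        abel
      rw [coeff_wcomp_of _ hww, coeff_wcomp_of _ hw, coeff_monomial_mul', if_pos hm]
    · have hww : mwt M β ≠ w := by
        intro h
        apply hw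
        rw [← h, hwβ]
        abel
      rw [coeff_wcomp_of_not _ hww, coeff_wcomp_of_not _ hw, mul_zero]
  · rw [if_neg hm]
    by_cases hww : mwt M β = w
    · rw [coeff_wcomp_of _ hww, coeff_monomial_mul', if_neg hm]
    · rw [coeff_wcomp_of_not _ hww]

lemma wcomp_eq_self {w : Fin r → ℚ} {h : MvPolynomial (Fin n) k}
    (hhom : ∀ β ∈ h.support, mwt M β = w) : wcomp M w h = h := by
  apply MvPolynomial.ext
  intro β
  by_cases hβ : mwt M β = w
  · rw [coeff_wcomp_of _ hβ]
  · rw [coeff_wcomp_of_not _ hβ]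
    by_cases hsupp : β ∈ h.support
    · exact absurd (hhom β hsupp) hβ
    · exact (notMem_support_iff.mp hsupp).symm

lemma wcomp_eq_zero_of_ne {w w' : Fin r → ℚ} {h : MvPolynomial (Fin n) k}
    (hhom : ∀ β ∈ h.support, mwt M β = w) (hw : w' ≠ w) : wcomp M w' h = 0 := by
  apply MvPolynomial.ext
  intro β
  rw [coeff_zero]
  by_cases hβ : mwt M β = w'
  · rw [coeff_wcomp_of _ hβ]
    by_cases hsupp : β ∈ h.support
    · exact absurd ((hhom β hsupp).symm.trans hβ).symm hw
    · exact notMem_support_iff.mp hsupp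
  · exact coeff_wcomp_of_not _ hβ

/-- The M-initial form equals the weight component at the minimal weight. -/
lemma initialForm_mLe_eq_wcomp_min {f : MvPolynomial (Fin n) k} {α0 : Fin n →₀ ℕ}
    (h1 : α0 ∈ f.support) (h2 : ∀ γ ∈ f.support, mLe M α0 γ) :
    initialForm (mLe M) f = wcomp M (mwt M α0) f := by
  apply MvPolynomial.ext
  intro β
  by_cases hsupp : β ∈ f.support
  · by_cases hcond : ∀ γ ∈ f.support, mLe M β γ
    · have hw : mwt M β = mwt M α0 := mwt_eq_of_le_le (hcond α0 h1) (h2 β hsupp)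
      rw [coeff_initialForm_of f hcond, coeff_wcomp_of f hw]
    · have hw : mwt M β ≠ mwt M α0 := by
        intro he
        exact hcond fun γ hγ => mLe_trans M _ _ _ (mLe_of_mwt_eq he) (h2 γ hγ)
      rw [coeff_initialForm_of_not f hcond, coeff_wcomp_of_not f hw]
  · have e1 : coeff β (initialForm (mLe M) f) = 0 := by
      by_cases hcond : ∀ γ ∈ f.support, mLe M β γ
      · rw [coeff_initialForm_of f hcond]
        exact notMem_support_iff.mp hsupp
      · exact coeff_initialForm_of_not f hcond
    have e2 : coeff β (wcomp M (mwt M α0) f) = 0 := by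
      by_cases hw : mwt M β = mwt M α0
      · rw [coeff_wcomp_of f hw]
        exact notMem_support_iff.mp hsupp
      · exact coeff_wcomp_of_not f hw
    rw [e1, e2]

lemma support_initialForm_mLe_weight {f : MvPolynomial (Fin n) k} (hf : f ≠ 0) :
    ∃ w : Fin r → ℚ, initialForm (mLe M) f = wcomp M w f ∧
      (∀ β ∈ (initialForm (mLe M) f).support, mwt M β = w) ∧
      (∀ γ ∈ f.support, toLex w ≤ toLex (mwt M γ)) := by
  obtain ⟨α0, h1, h2⟩ := exists_rel_min (mLe M) (mLe_total M) (mLe_trans M) f.support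
    (MvPolynomial.support_nonempty.mpr hf)
  refine ⟨mwt M α0, initialForm_mLe_eq_wcomp_min h1 h2, ?_, fun γ hγ => h2 γ hγ⟩
  intro β hβ
  rw [initialForm_mLe_eq_wcomp_min h1 h2] at hβ
  exact (mem_support_wcomp.mp hβ).2

lemma initialForm_mLe_eq_wcomp_of {w : Fin r → ℚ} {f : MvPolynomial (Fin n) k}
    (hlb : ∀ γ ∈ f.support, toLex w ≤ toLex (mwt M γ))
    (hne : wcomp M w f ≠ 0) : initialForm (mLe M) f = wcomp M w f := by
  obtain ⟨β, hβ⟩ := MvPolynomial.support_nonempty.mpr hne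
  obtain ⟨hβf, hβw⟩ := mem_support_wcomp.mp hβ
  have hf : f ≠ 0 := fun h => by simp [h] at hβf
  obtain ⟨α0, h1, h2⟩ := exists_rel_min (mLe M) (mLe_total M) (mLe_trans M) f.support
    (MvPolynomial.support_nonempty.mpr hf)
  have hα0w : mwt M α0 = w := by
    have ha : toLex (mwt M α0) ≤ toLex w := by
      have := h2 β hβf
      rwa [mLe, hβw] at this
    exact toLex.injective (le_antisymm ha (hlb α0 h1))
  rw [initialForm_mLe_eq_wcomp_min h1 h2, hα0w]

end Wcomp

section Grading

variable {k : Type} [Field k] {n r : ℕ} {M : Matrix (Fin r) (Fin n) ℚ}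

/-- Every weight component of an element of `in_M(I)` is `0` or of the form `in_M(f)`, `f ∈ I`. -/
lemma wcomp_initialIdeal {I : Ideal (MvPolynomial (Fin n) k)}
    {h : MvPolynomial (Fin n) k} (hh : h ∈ initialIdeal (mLe M) I) :
    ∀ w : Fin r → ℚ, wcomp M w h = 0 ∨
      ∃ f ∈ I, f ≠ 0 ∧ wcomp M w h = initialForm (mLe M) f := by
  classical
  set Q : MvPolynomial (Fin n) k → Prop := fun x => ∀ w : Fin r → ℚ, wcomp M w x = 0 ∨
      ∃ f ∈ I, f ≠ 0 ∧ wcomp M w x = initialForm (mLe M) f with hQ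
  -- additivity of Q
  have hadd : ∀ x y, Q x → Q y → Q (x + y) := by
    intro x y hx hy w
    rw [wcomp_add]
    rcases hx w with hx0 | ⟨f1, hf1I, hf10, e1⟩
    · rcases hy w with hy0 | ⟨f2, hf2I, hf20, e2⟩
      · left; rw [hx0, hy0, add_zero]
      · right
        exact ⟨f2, hf2I, hf20, by rw [hx0, zero_add, e2]⟩
    · rcases hy w with hy0 | ⟨f2, hf2I, hf20, e2⟩
      · right
        exact ⟨f1, hf1I, hf10, by rw [hy0, add_zero, e1]⟩
      · by_cases hs : wcomp M w x + wcomp M w y = 0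
        · left; exact hs
        · right
          -- the initial forms are weight-w components of `f1`, `f2`
          have hne1 : wcomp M w x ≠ 0 := by
            rw [e1]
            exact initialForm_ne_zero (mLe_total M) (mLe_trans M) hf10
          obtain ⟨β1, hβ1⟩ := MvPolynomial.support_nonempty.mpr hne1
          have hβ1w : mwt M β1 = w := (mem_support_wcomp.mp hβ1).2
          have hβ1f : β1 ∈ (initialForm (mLe M) f1).support := by rwa [← e1]
          obtain ⟨hβ1supp, hβ1min⟩ := mem_support_initialForm.mp hβ1f
          have hlb1 : ∀ γ ∈ f1.support, toLex w ≤ toLex (mwt M γ) := by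
            intro γ hγ
            have := hβ1min γ hγ
            rwa [mLe, hβ1w] at this
          have hwc1 : wcomp M w f1 ≠ 0 := by
            intro h0
            have := coeff_wcomp_of (M := M) f1 hβ1w
            rw [h0, coeff_zero] at this
            exact mem_support_iff.mp hβ1supp this.symm
          have e1' : initialForm (mLe M) f1 = wcomp M w f1 :=
            initialForm_mLe_eq_wcomp_of hlb1 hwc1
          have hne2 : wcomp M w y ≠ 0 := by
            rw [e2]
            exact initialForm_ne_zero (mLe_total M) (mLe_trans M) hf20
          obtain ⟨β2, hβ2⟩ := MvPolynomial.support_nonempty.mpr hne2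
          have hβ2w : mwt M β2 = w := (mem_support_wcomp.mp hβ2).2
          have hβ2f : β2 ∈ (initialForm (mLe M) f2).support := by rwa [← e2]
          obtain ⟨hβ2supp, hβ2min⟩ := mem_support_initialForm.mp hβ2f
          have hlb2 : ∀ γ ∈ f2.support, toLex w ≤ toLex (mwt M γ) := by
            intro γ hγ
            have := hβ2min γ hγ
            rwa [mLe, hβ2w] at this
          have hwc2 : wcomp M w f2 ≠ 0 := by
            intro h0
            have := coeff_wcomp_of (M := M) f2 hβ2w
            rw [h0, coeff_zero] at this
            exact mem_support_iff.mp hβ2supp this.symm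
          have e2' : initialForm (mLe M) f2 = wcomp M w f2 :=
            initialForm_mLe_eq_wcomp_of hlb2 hwc2
          refine ⟨f1 + f2, I.add_mem hf1I hf2I, ?_, ?_⟩
          · intro h0
            have hf2e : f2 = -f1 := by linear_combination (norm := ring_nf) h0
            rw [hf2e, initialForm_neg] at e2
            rw [e1, e2] at hs
            exact hs (add_neg_cancel _)
          · have hlb : ∀ γ ∈ (f1 + f2).support, toLex w ≤ toLex (mwt M γ) := by
              intro γ hγ
              rcases Finset.mem_union.mp (Finsupp.support_add hγ) with h | h
              · exact hlb1 γ h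
              · exact hlb2 γ h
            have hwc : wcomp M w (f1 + f2) ≠ 0 := by
              rw [wcomp_add, ← e1', ← e2', ← e1, ← e2]
              exact hs
            rw [initialForm_mLe_eq_wcomp_of hlb hwc, wcomp_add, ← e1', ← e2', e1, e2]
  -- closure under multiplication by a monomial
  have hmon : ∀ (m : Fin n →₀ ℕ) (c : k) (x), Q x → Q (monomial m c * x) := by
    intro m c x hx w
    by_cases hc : c = 0
    · left
      rw [hc]
      simp [wcomp_zero]
    · rw [wcomp_monomial_mul hc]
      rcases hx (w - mwt M m) with h0 | ⟨f, hfI, hf0, e⟩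
      · left; rw [h0, mul_zero]
      · right
        refine ⟨monomial m c * f, I.mul_mem_left _ hfI,
          mul_ne_zero (by simpa using hc) hf0, ?_⟩
        rw [e, initialForm_monomial_mul (mLe M) (fun m a b => mLe_add_left_iff M m a b) hc]
  have hzero : Q 0 := by
    intro w
    left
    exact wcomp_zero w
  refine Submodule.span_induction ?_ hzero (fun x y _ _ hx hy => hadd x y hx hy) ?_ hh
  · rintro x ⟨f, hfI, hf0, rfl⟩ w
    obtain ⟨w', e, hhom, _⟩ := support_initialForm_mLe_weight (M := M) hf0
    by_cases hw : w = w'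
    · subst hw
      right
      exact ⟨f, hfI, hf0, wcomp_eq_self hhom⟩
    · left
      exact wcomp_eq_zero_of_ne hhom hw
  · intro a x _ hx
    rw [smul_eq_mul]
    have := MvPolynomial.as_sum a
    rw [this, Finset.sum_mul]
    apply Finset.sum_induction _ Q hadd hzero
    intro m _
    exact hmon m (coeff m a) x hx
end Grading

section Claim

variable {k : Type} [Field k] {n r : ℕ} {M : Matrix (Fin r) (Fin n) ℚ}

lemma initialForm_zero {le : (Fin n →₀ ℕ) → (Fin n →₀ ℕ) → Prop} :
    initialForm le (0 : MvPolynomial (Fin n) k) = 0 := by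
  classical
  rw [initialForm]
  simp

/-- A monomial in an ideal generated by "monomials" is divisible by one of them. -/
lemma exists_divisor_of_mem_span_monomials {S : Set (MvPolynomial (Fin n) k)}
    (hS : ∀ s ∈ S, ∃ (γ : Fin n →₀ ℕ) (c : k), s = monomial γ c) {p : MvPolynomial (Fin n) k}
    (hp : p ∈ Ideal.span S) :
    ∀ β ∈ p.support, ∃ s ∈ S, ∃ (γ : Fin n →₀ ℕ) (c : k), s = monomial γ c ∧ c ≠ 0 ∧ γ ≤ β := by
  classical
  refine Submodule.span_induction ?_ ?_ ?_ ?_ hp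
  · intro x hx β hβ
    obtain ⟨γ, c, rfl⟩ := hS x hx
    rw [mem_support_iff, coeff_monomial] at hβ
    by_cases hγ : γ = β
    · subst hγ
      rw [if_pos rfl] at hβ
      exact ⟨monomial γ c, hx, γ, c, rfl, hβ, le_rfl⟩
    · rw [if_neg hγ] at hβ
      exact absurd rfl hβ
  · intro β hβ
    simp at hβ
  · intro x y _ _ hx hy β hβ
    have : β ∈ x.support ∪ y.support := Finsupp.support_add hβ
    rcases Finset.mem_union.mp this with h | h
    · exact hx β h
    · exact hy β h
  · intro a x _ hx β hβ
    rw [smul_eq_mul] at hβ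
    have := MvPolynomial.support_mul a x hβ
    rw [Finset.mem_add] at this
    obtain ⟨u, hu, v, hv, rfl⟩ := this
    obtain ⟨s, hs, γ, c, he, hc, hle⟩ := hx v hv
    exact ⟨s, hs, γ, c, he, hc, le_trans hle le_add_self⟩

/-- Key induction: if the `mo`-lead exponent of every `g ∈ G` is also of minimal `M`-weight in
`g`, then the `mo`-lead exponent of `in_M(f)`, `f ∈ I ∖ {0}`, is divisible by the lead exponent
of some `g ∈ G`. -/
lemma initialForm_mLe_lead_divisible {mo : MinMonomialOrder n}
    {I : Ideal (MvPolynomial (Fin n) k)} {G : Finset (MvPolynomial (Fin n) k)}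
    (hGI : (↑G : Set (MvPolynomial (Fin n) k)) ⊆ ↑I)
    (hspan : initialIdeal mo.le I = Ideal.span ((fun g => initialForm mo.le g) '' ↑G))
    (hmonic : ∀ g ∈ G, ∀ α, IsLeadExp mo g α → MvPolynomial.coeff α g = 1)
    (H : ∀ g ∈ G, ∀ γ, IsLeadExp mo g γ → ∀ δ ∈ g.support, mLe M γ δ) :
    ∀ (α : Fin n →₀ ℕ) (f : MvPolynomial (Fin n) k), f ∈ I → f ≠ 0 → IsLeadExp mo f α →
      ∃ g ∈ G, ∃ γ β, IsLeadExp mo g γ ∧ IsLeadExp mo (initialForm (mLe M) f) β ∧ γ ≤ β := by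
  intro α
  refine (mo.wf).induction
    (C := fun α => ∀ f : MvPolynomial (Fin n) k, f ∈ I → f ≠ 0 → IsLeadExp mo f α →
      ∃ g ∈ G, ∃ γ β, IsLeadExp mo g γ ∧ IsLeadExp mo (initialForm (mLe M) f) β ∧ γ ≤ β)
    α ?_
  clear α
  intro α IH f hfI hf0 hlead
  -- `in_mo(f)` lies in the span of the lead monomials of `G`
  have hmem : initialForm mo.le f ∈ Ideal.span ((fun g => initialForm mo.le g) '' ↑G) := by
    rw [← hspan]
    exact Ideal.subset_span ⟨f, hfI, hf0, rfl⟩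
  have hS : ∀ s ∈ (fun g => initialForm mo.le g) '' (↑G : Set (MvPolynomial (Fin n) k)),
      ∃ (γ : Fin n →₀ ℕ) (c : k), s = monomial γ c := by
    rintro s ⟨g, hg, rfl⟩
    by_cases hg0 : g = 0
    · refine ⟨0, 0, ?_⟩
      show initialForm mo.le g = _
      rw [hg0, initialForm_zero, monomial_zero]
    · obtain ⟨γg, hγg⟩ := exists_isLeadExp mo hg0
      exact ⟨γg, coeff γg g, initialForm_eq_monomial hγg⟩
  have hα : α ∈ (initialForm mo.le f).support :=
    mem_support_initialForm.mpr ⟨hlead.1, hlead.2⟩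
  obtain ⟨s, hsmem, γ, c, hse, hc, hγα⟩ :=
    exists_divisor_of_mem_span_monomials hS hmem α hα
  obtain ⟨g, hgG, rfl⟩ := hsmem
  have hse' : initialForm mo.le g = monomial γ c := hse
  -- identify γ as the lead exponent of g
  have hg0 : g ≠ 0 := by
    rintro rfl
    rw [initialForm_zero] at hse'
    exact hc (monomial_eq_zero.mp hse'.symm)
  obtain ⟨γg, hγg⟩ := exists_isLeadExp mo hg0
  have : monomial γ c = monomial γg (coeff γg g) := by
    rw [← hse', initialForm_eq_monomial hγg]
  rcases (monomial_eq_monomial_iff _ _ _ _).mp this with ⟨h1, _⟩ | ⟨h1, _⟩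
  · subst h1
    clear this hse hse'
    have hγlead : IsLeadExp mo g γ := hγg
    -- set up the reduction
    set m := α - γ with hmdef
    have hm : m + γ = α := tsub_add_cancel_of_le hγα
    have hcf : coeff α f ≠ 0 := mem_support_iff.mp hlead.1
    set q : MvPolynomial (Fin n) k := monomial m (coeff α f) * g with hqdef
    have hq_lead : IsLeadExp mo q α := by
      have := isLeadExp_monomial_mul (m := m) hcf hγlead
      rwa [hm] at this
    have hcoeffq : coeff α q = coeff α f := by
      rw [hqdef, ← hm, coeff_monomial_mul, hmonic g hgG γ hγlead, mul_one]
    have hqsupp : ∀ δ ∈ q.support, mLe M α δ := by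
      intro δ hδ
      obtain ⟨δ', hδ', rfl⟩ := (mem_support_monomial_mul hcf).mp hδ
      have := (mLe_add_left_iff M m γ δ').mpr (H g hgG γ hγlead δ' hδ')
      rwa [hm] at this
    by_cases hmin : ∀ δ ∈ f.support, mLe M α δ
    · -- α itself has minimal weight: it is the lead exponent of in_M(f)
      refine ⟨g, hgG, γ, α, hγlead, ⟨mem_support_initialForm.mpr ⟨hlead.1, hmin⟩, ?_⟩, hγα⟩
      intro β hβ
      exact hlead.2 β (support_initialForm_subset hβ)
    · -- there is a term of strictly smaller weight; reduce and use the IH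
      push_neg at hmin
      obtain ⟨δ, hδf, hδlt⟩ := hmin
      have hδlt' : toLex (mwt M δ) < toLex (mwt M α) := by
        simp only [mLe] at hδlt
        exact not_le.mp hδlt
      set f' := f - q with hf'def
      have hf'I : f' ∈ I := I.sub_mem hfI (I.mul_mem_left _ (hGI hgG))
      have hαf' : coeff α f' = 0 := by
        rw [hf'def, coeff_sub, hcoeffq, sub_self]
      have hδq : δ ∉ q.support := by
        intro h
        have := hqsupp δ h
        simp only [mLe] at this
        exact absurd this (not_le.mpr hδlt')
      have hδf' : δ ∈ f'.support := by
        rw [mem_support_iff, hf'def, coeff_sub, notMem_support_iff.mp hδq, sub_zero]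
        exact mem_support_iff.mp hδf
      have hf'0 : f' ≠ 0 := fun h => by simp [h] at hδf'
      have hf'supp : ∀ β ∈ f'.support, β ∈ f.support ∨ β ∈ q.support := by
        intro β hβ
        by_contra hcon
        push_neg at hcon
        rw [mem_support_iff, hf'def, coeff_sub, notMem_support_iff.mp hcon.1,
          notMem_support_iff.mp hcon.2, sub_self] at hβ
        exact hβ rfl
      obtain ⟨α', hα'⟩ := exists_isLeadExp mo hf'0
      have hstrict : mo.le α α' ∧ α' ≠ α := by
        constructor
        · rcases hf'supp α' hα'.1 with h | h
          · exact hlead.2 α' h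
          · exact hq_lead.2 α' h
        · intro h
          rw [h] at hα'
          exact (mem_support_iff.mp hα'.1) hαf'
      -- the initial forms of f and f' coincide
      have hfsupp : ∀ β ∈ f.support, β ∈ f'.support ∨ β ∈ q.support := by
        intro β hβ
        by_contra hcon
        push_neg at hcon
        have : coeff β f = 0 := by
          have h1 := notMem_support_iff.mp hcon.1
          rw [hf'def, coeff_sub, notMem_support_iff.mp hcon.2, sub_zero] at h1
          exact h1
        exact mem_support_iff.mp hβ this
      have heq : initialForm (mLe M) f = initialForm (mLe M) f' := by
        apply MvPolynomial.ext
        intro β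
        by_cases hx : toLex (mwt M β) < toLex (mwt M α)
        · have hβq : β ∉ q.support := by
            intro h
            have := hqsupp β h
            simp only [mLe] at this
            exact absurd this (not_le.mpr hx)
          have hcoeff : coeff β f = coeff β f' := by
            rw [hf'def, coeff_sub, notMem_support_iff.mp hβq, sub_zero]
          have hcond : (∀ γ' ∈ f.support, mLe M β γ') ↔ ∀ γ' ∈ f'.support, mLe M β γ' := by
            constructor
            · intro hcf γ' hγ'
              rcases hf'supp γ' hγ' with h | h
              · exact hcf γ' h
              · have := hqsupp γ' h
                simp only [mLe] at this ⊢
                exact le_trans (le_of_lt hx) this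
            · intro hcf γ' hγ'
              rcases hfsupp γ' hγ' with h | h
              · exact hcf γ' h
              · have := hqsupp γ' h
                simp only [mLe] at this ⊢
                exact le_trans (le_of_lt hx) this
          by_cases hcf : ∀ γ' ∈ f.support, mLe M β γ'
          · rw [coeff_initialForm_of f hcf, coeff_initialForm_of f' (hcond.mp hcf), hcoeff]
          · rw [coeff_initialForm_of_not f hcf,
              coeff_initialForm_of_not f' (fun h => hcf (hcond.mpr h))]
        · have h1 : ¬ ∀ γ' ∈ f.support, mLe M β γ' := by
            intro h
            have := h δ hδf
            simp only [mLe] at this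
            exact hx (lt_of_le_of_lt this hδlt')
          have h2 : ¬ ∀ γ' ∈ f'.support, mLe M β γ' := by
            intro h
            have := h δ hδf'
            simp only [mLe] at this
            exact hx (lt_of_le_of_lt this hδlt')
          rw [coeff_initialForm_of_not f h1, coeff_initialForm_of_not f' h2]
      rw [heq]
      exact IH α' hstrict f' hf'I hf'0 hα'
  · exact absurd h1 hc

end Claim

section Final

variable {k : Type} [Field k] {n r : ℕ} {M : Matrix (Fin r) (Fin n) ℚ}

lemma monomial_image_shape (mo : MinMonomialOrder n) (G : Finset (MvPolynomial (Fin n) k)) :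
    ∀ s ∈ (fun g => initialForm mo.le g) '' (↑G : Set (MvPolynomial (Fin n) k)),
      ∃ (γ : Fin n →₀ ℕ) (c : k), s = monomial γ c := by
  rintro s ⟨g, _, rfl⟩
  by_cases hg0 : g = 0
  · refine ⟨0, 0, ?_⟩
    show initialForm mo.le g = _
    rw [hg0, initialForm_zero, monomial_zero]
  · obtain ⟨γg, hγg⟩ := exists_isLeadExp mo hg0
    exact ⟨γg, coeff γg g, initialForm_eq_monomial hγg⟩

lemma isLeadExp_of_initialForm_eq_monomial {mo : MinMonomialOrder n}
    {g : MvPolynomial (Fin n) k} {γ : Fin n →₀ ℕ} {c : k} (hc : c ≠ 0)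
    (hse : initialForm mo.le g = monomial γ c) : IsLeadExp mo g γ := by
  have hg0 : g ≠ 0 := by
    rintro rfl
    rw [initialForm_zero] at hse
    exact hc (monomial_eq_zero.mp hse.symm)
  obtain ⟨γg, hγg⟩ := exists_isLeadExp mo hg0
  rcases (monomial_eq_monomial_iff _ _ _ _).mp
      (hse.symm.trans (initialForm_eq_monomial hγg)) with ⟨h1, _⟩ | ⟨h1, _⟩
  · exact h1.symm ▸ hγg
  · exact absurd h1 hc

theorem stmt_5' {I : Ideal (MvPolynomial (Fin n) k)} {mo : MinMonomialOrder n}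
    {G : Finset (MvPolynomial (Fin n) k)} (hG : IsReducedGB mo I G)
    (M : Matrix (Fin r) (Fin n) ℚ) :
    initialIdeal mo.le (initialIdeal (mLe M) I) = initialIdeal mo.le I ↔
      ∀ g ∈ G, initialForm mo.le (initialForm (mLe M) g) = initialForm mo.le g := by
  obtain ⟨hGI, hG0, hspan, hmonic, _hpairs, hred⟩ := hG
  constructor
  · -- forward direction: use reducedness
    intro hEq g hgG
    have hgI : g ∈ I := hGI hgG
    have hg0 : g ≠ 0 := fun h => hG0 (h ▸ hgG)
    have hM0 : initialForm (mLe M) g ≠ 0 :=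
      initialForm_ne_zero (mLe_total M) (mLe_trans M) hg0
    have hmem : initialForm mo.le (initialForm (mLe M) g) ∈
        Ideal.span ((fun g => initialForm mo.le g) '' ↑G) := by
      rw [← hspan, ← hEq]
      exact Ideal.subset_span
        ⟨initialForm (mLe M) g, Ideal.subset_span ⟨g, hgI, hg0, rfl⟩, hM0, rfl⟩
    obtain ⟨β, hβ⟩ := exists_isLeadExp mo hM0
    have hβg : β ∈ g.support := support_initialForm_subset hβ.1
    have hβ' : β ∈ (initialForm mo.le (initialForm (mLe M) g)).support :=
      mem_support_initialForm.mpr ⟨hβ.1, hβ.2⟩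
    obtain ⟨s, hsmem, γ, c, hse, hc, hγβ⟩ :=
      exists_divisor_of_mem_span_monomials (monomial_image_shape mo G) hmem β hβ'
    obtain ⟨g', hg'G, rfl⟩ := hsmem
    have hse' : initialForm mo.le g' = monomial γ c := hse
    have hγlead : IsLeadExp mo g' γ := isLeadExp_of_initialForm_eq_monomial hc hse'
    have hβlead : IsLeadExp mo g β := by
      by_contra hnot
      exact hred g hgG g' hg'G β hβg hnot γ hγlead hγβ
    rw [initialForm_eq_monomial hβ, initialForm_eq_monomial hβlead,
      coeff_initialForm_of_mem_support hβ.1]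
  · -- reverse direction
    intro hgcond
    have H : ∀ g ∈ G, ∀ γ, IsLeadExp mo g γ → ∀ δ ∈ g.support, mLe M γ δ := by
      intro g hgG γ hγ δ hδ
      have hg0 : g ≠ 0 := fun h => hG0 (h ▸ hgG)
      have hM0 : initialForm (mLe M) g ≠ 0 :=
        initialForm_ne_zero (mLe_total M) (mLe_trans M) hg0
      obtain ⟨β, hβ⟩ := exists_isLeadExp mo hM0
      have hβmem : β ∈ (initialForm mo.le (initialForm (mLe M) g)).support :=
        mem_support_initialForm.mpr ⟨hβ.1, hβ.2⟩
      rw [hgcond g hgG] at hβmem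
      have hβlead : IsLeadExp mo g β := mem_support_initialForm.mp hβmem
      have hβγ : β = γ := IsLeadExp.unique hβlead hγ
      rw [hβγ] at hβ
      exact (mem_support_initialForm.mp hβ.1).2 δ hδ
    apply le_antisymm
    · show initialIdeal mo.le (initialIdeal (mLe M) I) ≤ initialIdeal mo.le I
      show Ideal.span {p | ∃ f ∈ initialIdeal (mLe M) I, f ≠ 0 ∧ p = initialForm mo.le f} ≤
        initialIdeal mo.le I
      refine Ideal.span_le.mpr ?_
      rintro p ⟨h, hhJ, hh0, rfl⟩
      show initialForm mo.le h ∈ (initialIdeal mo.le I : Set (MvPolynomial (Fin n) k))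
      obtain ⟨β, hβ⟩ := exists_isLeadExp mo hh0
      rcases wcomp_initialIdeal hhJ (mwt M β) with h0 | ⟨f, hfI, hf0, e⟩
      · exfalso
        have := coeff_wcomp_of (M := M) h (rfl : mwt M β = mwt M β)
        rw [h0, coeff_zero] at this
        exact mem_support_iff.mp hβ.1 this.symm
      · have hβw : β ∈ (wcomp M (mwt M β) h).support :=
          mem_support_wcomp.mpr ⟨hβ.1, rfl⟩
        have hlead2 : IsLeadExp mo (wcomp M (mwt M β) h) β :=
          ⟨hβw, fun δ hδ => hβ.2 δ (mem_support_wcomp.mp hδ).1⟩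
        have heq1 : initialForm mo.le h = initialForm mo.le (wcomp M (mwt M β) h) := by
          rw [initialForm_eq_monomial hβ, initialForm_eq_monomial hlead2,
            coeff_wcomp_of h (rfl : mwt M β = mwt M β)]
        rw [heq1, e]
        obtain ⟨αf, hαf⟩ := exists_isLeadExp mo hf0
        obtain ⟨g, hgG, γ, β', hγlead, hβ'lead, hγβ'⟩ :=
          initialForm_mLe_lead_divisible hGI hspan hmonic H αf f hfI hf0 hαf
        rw [initialForm_eq_monomial hβ'lead, SetLike.mem_coe, hspan]
        have hfactor : monomial β' (coeff β' (initialForm (mLe M) f)) =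
            monomial (β' - γ) (coeff β' (initialForm (mLe M) f)) * monomial γ 1 := by
          rw [monomial_mul, tsub_add_cancel_of_le hγβ', mul_one]
        rw [hfactor]
        refine Ideal.mul_mem_left _ _ (Ideal.subset_span ⟨g, hgG, ?_⟩)
        show initialForm mo.le g = monomial γ 1
        rw [initialForm_eq_monomial hγlead, hmonic g hgG γ hγlead]
    · show initialIdeal mo.le I ≤ initialIdeal mo.le (initialIdeal (mLe M) I)
      rw [hspan]
      refine Ideal.span_le.mpr ?_
      rintro p ⟨g, hgG', rfl⟩
      have hgG : g ∈ G := hgG'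
      have hgI : g ∈ I := hGI hgG'
      have hg0 : g ≠ 0 := fun h => hG0 (h ▸ hgG)
      have hM0 : initialForm (mLe M) g ≠ 0 :=
        initialForm_ne_zero (mLe_total M) (mLe_trans M) hg0
      show initialForm mo.le g ∈
        (initialIdeal mo.le (initialIdeal (mLe M) I) : Set (MvPolynomial (Fin n) k))
      rw [← hgcond g hgG]
      exact Ideal.subset_span
        ⟨initialForm (mLe M) g, Ideal.subset_span ⟨g, hgI, hg0, rfl⟩, hM0, rfl⟩

end Final


/-- **Membership in `C^r_>(I)` is checked on the reduced Gröbner basis** (Lemma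
`Cinequalities`): `in_>(in_M(I)) = in_>(I)` iff `in_>(in_M(g)) = in_>(g)` for all `g` in the
reduced Gröbner basis `G_>(I)`. -/
theorem stmt_5 {k : Type} [Field k] {n r : ℕ}
    (I : Ideal (MvPolynomial (Fin n) k)) (mo : MinMonomialOrder n)
    (G : Finset (MvPolynomial (Fin n) k)) (hG : IsReducedGB mo I G)
    (M : Matrix (Fin r) (Fin n) ℚ) :
    initialIdeal mo.le (initialIdeal (mLe M) I) = initialIdeal mo.le I ↔
      ∀ g ∈ G, initialForm mo.le (initialForm (mLe M) g) = initialForm mo.le g :=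
  stmt_5' hG M
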